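/- In the threshold CRD, if configuration o has no X-molecules, exactly one Y^L-molecule Y^L_{p*} with p* = s > 0, possibly some Y^F_q molecules all with q > 0, and no reactions applicable, then the invariant value I(o) = Σ w_i·x_i (inherited from the initial configuration) satisfies Σ w_i·x_i ≥ s > t; hence Y^L_s correctly votes yes for the threshold predicate Σ w_i·x_i ≥ t. -/

import Mathlib

section
variable (k : ℕ)

/-- Species: `Sum.inl i` is input `Xᵢ`; `Sum.inr (false, p)` is `Yᴸ_p`;
`Sum.inr (true, q)` is `Yᶠ_q`. -/
abbrev TSp (k : ℕ) := Fin k ⊕ (Bool × ℤ)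

/-- The cutoff `s = max(|w₁|,...,|w_k|,|t|) + 1`. -/
def cutoff (w : Fin k → ℤ) (t : ℤ) : ℤ :=
  (((Finset.univ.sup fun i => (w i).natAbs) ⊔ t.natAbs : ℕ) : ℤ) + 1

/-- The linear invariant of the threshold CRD. -/
noncomputable def Ithr (w : Fin k → ℤ) (t : ℤ) (c : TSp k → ℕ) : ℤ :=
  (∑ i : Fin k, w i * (c (Sum.inl i) : ℤ)) +
  (∑ p ∈ Finset.Icc (-(cutoff k w t)) (cutoff k w t), p * (c (Sum.inr (false, p)) : ℤ)) +
  (∑ q ∈ Finset.Icc (-(cutoff k w t)) (cutoff k w t), q * (c (Sum.inr (true, q)) : ℤ))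

/-- if the stable configuration holds a single `Yᴸ_s` leader
(with only positive `Yᶠ` molecules left), then `Σ wᵢxᵢ ≥ s > t`, so the
yes vote of `Yᴸ_s` is correct. -/
theorem threshold_yes_correct (hk : 1 ≤ k) (w : Fin k → ℤ) (t : ℤ)
    (x : Fin k → ℕ) (o : TSp k → ℕ)
    (hI : Ithr k w t o = ∑ i : Fin k, w i * (x i : ℤ))
    (hX : ∀ i : Fin k, o (Sum.inl i) = 0)
    (hL : o (Sum.inr (false, cutoff k w t)) = 1)
    (hL' : ∀ p : ℤ, p ≠ cutoff k w t → o (Sum.inr (false, p)) = 0)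
    (hF : ∀ q : ℤ, q ≤ 0 → o (Sum.inr (true, q)) = 0) :
    cutoff k w t ≤ ∑ i : Fin k, w i * (x i : ℤ) ∧ t < cutoff k w t := by
  set s := cutoff k w t with hs
  have hs_pos : 0 < s := by
    have : (0:ℤ) ≤ (((Finset.univ.sup fun i => (w i).natAbs) ⊔ t.natAbs : ℕ) : ℤ) :=
      Int.natCast_nonneg _
    simp only [hs, cutoff]; linarith
  have hts : t < s := by
    have : t ≤ (t.natAbs : ℤ) := Int.le_natAbs
    have h2 : (t.natAbs : ℤ) ≤ (((Finset.univ.sup fun i => (w i).natAbs) ⊔ t.natAbs : ℕ) : ℤ) := by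
      exact_mod_cast Nat.le_max_right _ _
    simp only [hs, cutoff]; linarith
  refine ⟨?_, hts⟩
  have h1 : (∑ i : Fin k, w i * (o (Sum.inl i) : ℤ)) = 0 := by
    apply Finset.sum_eq_zero; intro i _; rw [hX i]; simp
  have h2 : (∑ p ∈ Finset.Icc (-s) s, p * (o (Sum.inr (false, p)) : ℤ)) = s := by
    rw [Finset.sum_eq_single s]
    · rw [hL]; ring
    · intro p _ hp; rw [hL' p hp]; simp
    · intro h; exact absurd (Finset.mem_Icc.mpr ⟨by linarith, le_refl s⟩) h
  have h3 : 0 ≤ (∑ q ∈ Finset.Icc (-s) s, q * (o (Sum.inr (true, q)) : ℤ)) := by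
    apply Finset.sum_nonneg; intro q _
    rcases le_or_gt q 0 with hq | hq
    · rw [hF q hq]; simp
    · positivity
  rw [← hI]
  simp only [Ithr, ← hs] at *
  rw [h1, h2]
  linarith

end
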